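/- Given PSD matrices Q and S_+ and the constraint matrix G = Q + [A B]^T S_+ [A B] − blkdiag(S,0) ⪰ 0, for any PSD covariance V satisfying the linear dynamics constraint, the Lagrangian term tr(G V) is nonnegative, and the dual function value tr(S(0))Σ_x + Σ_w Σ_k tr(S(k)) (minus the constraint penalty) lower-bounds the primal cost (weak duality for the covariance selection LQ problem). -/

import Mathlib

open Matrix Finset

lemma psd_trace_nonneg {ι : Type*} [Fintype ι] [DecidableEq ι] {P : Matrix ι ι ℝ}
    (hP : P.PosSemidef) : 0 ≤ P.trace := by
  rw [Matrix.trace]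
  refine Finset.sum_nonneg fun i _ => ?_
  exact hP.diag_nonneg

lemma trace_mul_nonneg {ι : Type*} [Fintype ι] [DecidableEq ι]
    {P N : Matrix ι ι ℝ} (hP : P.PosSemidef) (hN : N.PosSemidef) :
    0 ≤ (P * N).trace := by
  open MatrixOrder in
  obtain ⟨C, rfl⟩ := CStarAlgebra.nonneg_iff_eq_star_mul_self.mp hP.nonneg
  rw [Matrix.mul_assoc, Matrix.trace_mul_comm]
  exact psd_trace_nonneg (by simpa [Matrix.star_eq_conjTranspose] using hN.mul_mul_conjTranspose_same C)

theorem weak_duality_covariance_selection {n m T M : ℕ}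
    (A : Matrix (Fin n) (Fin n) ℝ) (B : Matrix (Fin n) (Fin m) ℝ)
    (Q : Matrix (Fin n ⊕ Fin m) (Fin n ⊕ Fin m) ℝ)
    (QT Sx Sw : Matrix (Fin n) (Fin n) ℝ)
    (W : Fin M → Matrix (Fin n ⊕ Fin m) (Fin n ⊕ Fin m) ℝ)
    (p : Fin M → ℕ → ℝ)
    (F : Matrix (Fin n) (Fin n ⊕ Fin m) ℝ)
    (hF : F = fromCols 1 0)
    -- primal feasibility
    (V : ℕ → Matrix (Fin n ⊕ Fin m) (Fin n ⊕ Fin m) ℝ)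
    (hVpsd : ∀ k, k ≤ T → (V k).PosSemidef)
    (hV0 : F * V 0 * Fᵀ = Sx)
    (hdyn : ∀ k, k < T →
      F * V (k + 1) * Fᵀ = fromCols A B * V k * (fromCols A B)ᵀ + Sw)
    (hpow : ∀ (i : Fin M) (k : ℕ), k < T → (W i * V k).trace ≤ p i k)
    -- dual variables and dual feasibility
    (S : ℕ → Matrix (Fin n) (Fin n) ℝ) (hSsym : ∀ k, (S k).IsSymm)
    (τ : Fin M → ℕ → ℝ) (hτ : ∀ i k, 0 ≤ τ i k)
    (hdualfeas : ∀ k, k < T →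
      (Q + ∑ i : Fin M, τ i k • W i +
        (fromCols A B)ᵀ * S (k + 1) * fromCols A B -
          fromBlocks (S k) 0 0 0).PosSemidef)
    (hterm : (QT - S T).PosSemidef) :
    (∀ k, k < T →
      0 ≤ ((Q + ∑ i : Fin M, τ i k • W i +
              (fromCols A B)ᵀ * S (k + 1) * fromCols A B -
                fromBlocks (S k) 0 0 0) * V k).trace) ∧
    (S 0 * Sx).trace + ∑ k ∈ Finset.range T, (S (k + 1) * Sw).trace -
        ∑ k ∈ Finset.range T, ∑ i : Fin M, τ i k * p i k ≤
      (QT * (F * V T * Fᵀ)).trace + ∑ k ∈ Finset.range T, (Q * V k).trace := by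
  have habnn : ∀ k, k < T →
      0 ≤ ((Q + ∑ i : Fin M, τ i k • W i +
              (fromCols A B)ᵀ * S (k + 1) * fromCols A B -
                fromBlocks (S k) 0 0 0) * V k).trace :=
    fun k hk => trace_mul_nonneg (hdualfeas k hk) (hVpsd k hk.le)
  refine ⟨habnn, ?_⟩
  have hblk : ∀ k : ℕ, Fᵀ * S k * F = fromBlocks (S k) 0 0 0 := by
    intro k
    rw [hF, transpose_fromCols, transpose_one, transpose_zero, fromRows_mul,
      Matrix.one_mul, Matrix.zero_mul, fromRows_mul_fromCols, Matrix.mul_one,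
      Matrix.mul_zero, Matrix.zero_mul, Matrix.mul_zero]
  have hexp : ∀ k, k < T →
      ((Q + ∑ i : Fin M, τ i k • W i +
          (fromCols A B)ᵀ * S (k + 1) * fromCols A B -
            fromBlocks (S k) 0 0 0) * V k).trace
        = (Q * V k).trace + (∑ i : Fin M, τ i k * (W i * V k).trace)
          + (S (k + 1) * (F * V (k + 1) * Fᵀ)).trace - (S (k + 1) * Sw).trace
          - (S k * (F * V k * Fᵀ)).trace := by
    intro k hk
    have hseq : fromCols A B * V k * (fromCols A B)ᵀ = F * V (k + 1) * Fᵀ - Sw :=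
      eq_sub_of_add_eq (hdyn k hk).symm
    have t3 : ((fromCols A B)ᵀ * S (k + 1) * fromCols A B * V k).trace
        = (S (k + 1) * (F * V (k + 1) * Fᵀ)).trace - (S (k + 1) * Sw).trace := by
      calc ((fromCols A B)ᵀ * S (k + 1) * fromCols A B * V k).trace
          = ((fromCols A B)ᵀ * (S (k + 1) * (fromCols A B * V k))).trace := by
            simp only [Matrix.mul_assoc]
        _ = ((S (k + 1) * (fromCols A B * V k)) * (fromCols A B)ᵀ).trace :=
            Matrix.trace_mul_comm _ _
        _ = (S (k + 1) * (fromCols A B * V k * (fromCols A B)ᵀ)).trace := by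
            simp only [Matrix.mul_assoc]
        _ = _ := by rw [hseq, Matrix.mul_sub, Matrix.trace_sub]
    have t4 : (fromBlocks (S k) 0 0 0 * V k).trace = (S k * (F * V k * Fᵀ)).trace := by
      calc (fromBlocks (S k) 0 0 0 * V k).trace
          = (Fᵀ * (S k * (F * V k))).trace := by rw [← hblk k]; simp only [Matrix.mul_assoc]
        _ = ((S k * (F * V k)) * Fᵀ).trace := Matrix.trace_mul_comm _ _
        _ = (S k * (F * V k * Fᵀ)).trace := by simp only [Matrix.mul_assoc]
    have t2 : ((∑ i : Fin M, τ i k • W i) * V k).trace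
        = ∑ i : Fin M, τ i k * (W i * V k).trace := by
      rw [Finset.sum_mul, Matrix.trace_sum]
      exact Finset.sum_congr rfl fun i _ => by
        rw [Matrix.smul_mul, Matrix.trace_smul, smul_eq_mul]
    rw [Matrix.sub_mul, Matrix.add_mul, Matrix.add_mul, Matrix.trace_sub, Matrix.trace_add,
      Matrix.trace_add, t2, t3, t4]
    ring
  have key : ∀ k, k < T →
      (S k * (F * V k * Fᵀ)).trace + (S (k + 1) * Sw).trace
          - (∑ i : Fin M, τ i k * p i k)
        ≤ (Q * V k).trace + (S (k + 1) * (F * V (k + 1) * Fᵀ)).trace := by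
    intro k hk
    have h0 := habnn k hk
    rw [hexp k hk] at h0
    have hWp : ∑ i : Fin M, τ i k * (W i * V k).trace ≤ ∑ i : Fin M, τ i k * p i k :=
      Finset.sum_le_sum fun i _ => mul_le_mul_of_nonneg_left (hpow i k hk) (hτ i k)
    linarith
  have hsum : ∑ k ∈ Finset.range T,
        ((S k * (F * V k * Fᵀ)).trace + (S (k + 1) * Sw).trace
          - ∑ i : Fin M, τ i k * p i k)
      ≤ ∑ k ∈ Finset.range T,
        ((Q * V k).trace + (S (k + 1) * (F * V (k + 1) * Fᵀ)).trace) :=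
    Finset.sum_le_sum fun k hk => key k (Finset.mem_range.mp hk)
  rw [Finset.sum_sub_distrib, Finset.sum_add_distrib, Finset.sum_add_distrib] at hsum
  have htel : ∑ k ∈ Finset.range T, (S k * (F * V k * Fᵀ)).trace
      - ∑ k ∈ Finset.range T, (S (k + 1) * (F * V (k + 1) * Fᵀ)).trace
      = (S 0 * (F * V 0 * Fᵀ)).trace - (S T * (F * V T * Fᵀ)).trace := by
    rw [← Finset.sum_sub_distrib]
    exact Finset.sum_range_sub' (fun k => (S k * (F * V k * Fᵀ)).trace) T
  have hf0 : (S 0 * (F * V 0 * Fᵀ)).trace = (S 0 * Sx).trace := by rw [hV0]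
  have hfT : (S T * (F * V T * Fᵀ)).trace ≤ (QT * (F * V T * Fᵀ)).trace := by
    have hP : (F * V T * Fᵀ).PosSemidef := by
      simpa using (hVpsd T le_rfl).mul_mul_conjTranspose_same F
    have h1 := trace_mul_nonneg hterm hP
    rw [Matrix.sub_mul, Matrix.trace_sub] at h1
    linarith
  linarith
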